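/- arXiv:2604.17645 — 6 statements merged into one kernel-verified Lean document; each statement's English description precedes it below -/
import Mathlib

section
/- Let g₀ : ℝⁿ → ℝ and g : ℝⁿ → ℝᵐ be twice continuously differentiable, and define the generalized Lagrangian L(q₀,q₁,q₂) := q₀·g₀(q₁) + ⟨q₂, g(q₁)⟩. Let q₀ : ℝ → ℝ, q₁ : ℝ → ℝⁿ, q₂ : ℝ → ℝᵐ be differentiable functions with derivatives u₀(t), u₁(t), u₂(t) respectively. Define q₃(t) := −∇_{q₁}L(q₀(t),q₁(t),q₂(t)), q₄(t) := g(q₁(t)), and q₅(t) := g₀(q₁(t)). Then q₃, q₄, q₅ are differentiable and for every t: q₃'(t) = −[∂²_{q₁}L(q₀(t),q₁(t),q₂(t))]·u₁(t) − u₀(t)·∇g₀(q₁(t)) − [Dg(q₁(t))]ᵀ·u₂(t), q₄'(t) = [Dg(q₁(t))]·u₁(t), and q₅'(t) = ⟨∇g₀(q₁(t)), u₁(t)⟩. -/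
open scoped RealInnerProductSpace

/-- **Natural dynamics of optimization (Theorem 4.1).**
For twice continuously differentiable data functions `g₀ : ℝⁿ → ℝ`, `g : ℝⁿ → ℝᵐ` and
the generalized Lagrangian `L(q₀,q₁,q₂) = q₀ g₀(q₁) + ⟨q₂, g(q₁)⟩`, if
`q₀, q₁, q₂` are differentiable curves with derivatives `u₀, u₁, u₂`, then the lifted
variables `q₃ = -∇_{q₁}L`, `q₄ = g ∘ q₁`, `q₅ = g₀ ∘ q₁` are differentiable and obey
the dynamical system (D). Here `∇_{q₁}L(a,x,y) = a • ∇g₀(x) + (Dg(x))ᵀ y` is encoded by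
`gradL`, the Hessian `∂²_{q₁}L` as the Fréchet derivative of `x ↦ gradL a x y`, and
`(Dg)ᵀ` as the adjoint of the Fréchet derivative of `g`. -/
theorem natural_dynamics_of_optimization {n m : ℕ}
    (g₀ : EuclideanSpace ℝ (Fin n) → ℝ)
    (g : EuclideanSpace ℝ (Fin n) → EuclideanSpace ℝ (Fin m))
    (hg₀ : ContDiff ℝ 2 g₀) (hg : ContDiff ℝ 2 g)
    (gradL : ℝ → EuclideanSpace ℝ (Fin n) → EuclideanSpace ℝ (Fin m) →
      EuclideanSpace ℝ (Fin n))
    (hgradL : ∀ a x y, gradL a x y =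
      a • gradient g₀ x + ContinuousLinearMap.adjoint (fderiv ℝ g x) y)
    (q₀ : ℝ → ℝ) (q₁ : ℝ → EuclideanSpace ℝ (Fin n)) (q₂ : ℝ → EuclideanSpace ℝ (Fin m))
    (u₀ : ℝ → ℝ) (u₁ : ℝ → EuclideanSpace ℝ (Fin n)) (u₂ : ℝ → EuclideanSpace ℝ (Fin m))
    (hq₀ : ∀ t, HasDerivAt q₀ (u₀ t) t)
    (hq₁ : ∀ t, HasDerivAt q₁ (u₁ t) t)
    (hq₂ : ∀ t, HasDerivAt q₂ (u₂ t) t)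
    (q₃ : ℝ → EuclideanSpace ℝ (Fin n))
    (hq₃ : ∀ t, q₃ t = -gradL (q₀ t) (q₁ t) (q₂ t))
    (q₄ : ℝ → EuclideanSpace ℝ (Fin m))
    (hq₄ : ∀ t, q₄ t = g (q₁ t))
    (q₅ : ℝ → ℝ)
    (hq₅ : ∀ t, q₅ t = g₀ (q₁ t)) :
    ∀ t : ℝ,
      HasDerivAt q₃
        (-(fderiv ℝ (fun x => gradL (q₀ t) x (q₂ t)) (q₁ t) (u₁ t))
          - u₀ t • gradient g₀ (q₁ t)
          - ContinuousLinearMap.adjoint (fderiv ℝ g (q₁ t)) (u₂ t)) t ∧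
      HasDerivAt q₄ (fderiv ℝ g (q₁ t) (u₁ t)) t ∧
      HasDerivAt q₅ ⟪gradient g₀ (q₁ t), u₁ t⟫ t := by
  intro t
  have hgdiff : Differentiable ℝ g := hg.differentiable (by norm_num)
  have hg₀diff : Differentiable ℝ g₀ := hg₀.differentiable (by norm_num)
  have hG : ContDiff ℝ 1 (gradient g₀) :=
    (InnerProductSpace.toDual ℝ (EuclideanSpace ℝ (Fin n))).symm.contDiff.comp
      (hg₀.fderiv_right (m := 1) (by norm_num))
  have hΦ : ContDiff ℝ 1 (fun x => ContinuousLinearMap.adjoint (fderiv ℝ g x)) := by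
    have h := (ContinuousLinearMap.adjoint
        (E := EuclideanSpace ℝ (Fin n)) (F := EuclideanSpace ℝ (Fin m))
        (𝕜 := ℝ)).toContinuousLinearEquiv.contDiff.comp
      (hg.fderiv_right (m := 1) (by norm_num))
    simpa [Function.comp_def] using h
  -- q₄
  have h4 : HasDerivAt q₄ (fderiv ℝ g (q₁ t) (u₁ t)) t := by
    have := (hgdiff (q₁ t)).hasFDerivAt.comp_hasDerivAt t (hq₁ t)
    simpa [funext hq₄, Function.comp_def] using this
  -- q₅
  have h5 : HasDerivAt q₅ ⟪gradient g₀ (q₁ t), u₁ t⟫ t := by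
    have h := (hg₀diff (q₁ t)).hasFDerivAt.comp_hasDerivAt t (hq₁ t)
    have heq : fderiv ℝ g₀ (q₁ t) (u₁ t) = ⟪gradient g₀ (q₁ t), u₁ t⟫ := by
      rw [gradient, InnerProductSpace.toDual_symm_apply]
    rw [← heq]
    simpa [funext hq₅, Function.comp_def] using h
  refine ⟨?_, h4, h5⟩
  -- derivative of A s = q₀ s • gradient g₀ (q₁ s)
  have hGq : HasDerivAt (fun s => gradient g₀ (q₁ s))
      (fderiv ℝ (gradient g₀) (q₁ t) (u₁ t)) t :=
    ((hG.differentiable one_ne_zero (q₁ t)).hasFDerivAt).comp_hasDerivAt t (hq₁ t)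
  have hA := (hq₀ t).smul hGq
  -- derivative of B s = adjoint (fderiv g (q₁ s)) (q₂ s)
  have hΦq : HasDerivAt (fun s => ContinuousLinearMap.adjoint (fderiv ℝ g (q₁ s)))
      (fderiv ℝ (fun x => ContinuousLinearMap.adjoint (fderiv ℝ g x)) (q₁ t) (u₁ t)) t :=
    ((hΦ.differentiable one_ne_zero (q₁ t)).hasFDerivAt).comp_hasDerivAt t (hq₁ t)
  have hB := hΦq.clm_apply (hq₂ t)
  -- the partial fderiv in x
  have h1 : HasFDerivAt (fun x => q₀ t • gradient g₀ x)
      (q₀ t • fderiv ℝ (gradient g₀) (q₁ t)) (q₁ t) :=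
    ((hG.differentiable one_ne_zero (q₁ t)).hasFDerivAt).const_smul (q₀ t)
  have h2 : HasFDerivAt (fun x => ContinuousLinearMap.adjoint (fderiv ℝ g x) (q₂ t))
      ((fderiv ℝ (fun x => ContinuousLinearMap.adjoint (fderiv ℝ g x)) (q₁ t)).flip (q₂ t))
      (q₁ t) := by
    have := ((hΦ.differentiable one_ne_zero (q₁ t)).hasFDerivAt).clm_apply
      (hasFDerivAt_const (q₂ t) (q₁ t))
    simpa using this
  have h3 : HasFDerivAt (fun x => gradL (q₀ t) x (q₂ t))
      (q₀ t • fderiv ℝ (gradient g₀) (q₁ t)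
        + (fderiv ℝ (fun x => ContinuousLinearMap.adjoint (fderiv ℝ g x)) (q₁ t)).flip (q₂ t))
      (q₁ t) := by
    have heq : (fun x => gradL (q₀ t) x (q₂ t)) =
        fun x => q₀ t • gradient g₀ x + ContinuousLinearMap.adjoint (fderiv ℝ g x) (q₂ t) :=
      funext fun x => hgradL _ x _
    rw [heq]; exact h1.add h2
  have hpart : fderiv ℝ (fun x => gradL (q₀ t) x (q₂ t)) (q₁ t) (u₁ t)
      = q₀ t • fderiv ℝ (gradient g₀) (q₁ t) (u₁ t)
        + (fderiv ℝ (fun x => ContinuousLinearMap.adjoint (fderiv ℝ g x)) (q₁ t) (u₁ t)) (q₂ t) := by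
    rw [h3.fderiv]; simp
  have hfull : HasDerivAt (fun s => q₀ s • gradient g₀ (q₁ s) + ContinuousLinearMap.adjoint (fderiv ℝ g (q₁ s)) (q₂ s)) _ t := hA.add hB
  have heq2 : (fun s => gradL (q₀ s) (q₁ s) (q₂ s)) =
      fun s => q₀ s • gradient g₀ (q₁ s) + ContinuousLinearMap.adjoint (fderiv ℝ g (q₁ s)) (q₂ s) :=
    funext fun s => hgradL _ _ _
  rw [← heq2] at hfull
  have hneg : HasDerivAt (fun s => -gradL (q₀ s) (q₁ s) (q₂ s)) _ t := hfull.neg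
  have hq3 : q₃ = fun s => -gradL (q₀ s) (q₁ s) (q₂ s) := funext hq₃
  rw [hq3]
  convert hneg using 1
  rw [hpart]
  abel
end

section
/- Let g₀ : ℝⁿ → ℝ and g : ℝⁿ → ℝᵐ be twice continuously differentiable, and define the generalized Lagrangian L(q₀,q₁,q₂) := q₀·g₀(q₁) + ⟨q₂, g(q₁)⟩. Suppose q₀ : ℝ → ℝ, q₁ : ℝ → ℝⁿ, q₂ : ℝ → ℝᵐ, q₃ : ℝ → ℝⁿ, q₄ : ℝ → ℝᵐ, q₅ : ℝ → ℝ are differentiable and satisfy, for all t, the dynamical system (D): q₀' = u₀, q₁' = u₁, q₂' = u₂, q₃' = −[∂²_{q₁}L(q₀,q₁,q₂)]u₁ − u₀·∇g₀(q₁) − [Dg(q₁)]ᵀu₂, q₄' = [Dg(q₁)]u₁, q₅' = ⟨∇g₀(q₁), u₁⟩, for some functions u₀, u₁, u₂. If at some time t₀ the initial conditions q₃(t₀) = −∇_{q₁}L(q₀(t₀),q₁(t₀),q₂(t₀)), q₄(t₀) = g(q₁(t₀)), q₅(t₀) = g₀(q₁(t₀)) hold, then for all t: q₃(t) + ∇_{q₁}L(q₀(t),q₁(t),q₂(t))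 = 0, q₄(t) = g(q₁(t)), and q₅(t) = g₀(q₁(t)). -/
open scoped RealInnerProductSpace
open ContinuousLinearMap

section Helpers

variable {E F : Type*} [NormedAddCommGroup E] [InnerProductSpace ℝ E] [CompleteSpace E]
    [NormedAddCommGroup F] [InnerProductSpace ℝ F] [CompleteSpace F]

/-- The adjoint as a real continuous linear map. -/
noncomputable def adjCLM (E F : Type*) [NormedAddCommGroup E] [InnerProductSpace ℝ E]
    [CompleteSpace E] [NormedAddCommGroup F] [InnerProductSpace ℝ F] [CompleteSpace F] :
    (E →L[ℝ] F) →L[ℝ] (F →L[ℝ] E) :=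
  LinearMap.mkContinuous
    { toFun := adjoint, map_add' := fun A B => by simp,
      map_smul' := fun c A => by simp } 1
    (fun A => by simp [(adjoint.norm_map A).le])

@[simp] lemma adjCLM_apply (A : E →L[ℝ] F) : adjCLM E F A = adjoint A := rfl

/-- `(toDual ℝ E).symm` as a real continuous linear map. -/
noncomputable def dualSymmCLM (E : Type*) [NormedAddCommGroup E] [InnerProductSpace ℝ E]
    [CompleteSpace E] : (E →L[ℝ] ℝ) →L[ℝ] E :=
  LinearMap.mkContinuous
    { toFun := (InnerProductSpace.toDual ℝ E).symm, map_add' := fun A B => by simp,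
      map_smul' := fun c A => by simp } 1
    (fun A => by simp [((InnerProductSpace.toDual ℝ E).symm.norm_map A).le])

lemma gradient_eq_dualSymmCLM (f : E → ℝ) (x : E) :
    gradient f x = dualSymmCLM E (fderiv ℝ f x) := rfl

lemma inner_gradient_eq (f : E → ℝ) (x v : E) :
    ⟪gradient f x, v⟫ = fderiv ℝ f x v := by
  rw [gradient]
  exact InnerProductSpace.toDual_symm_apply

lemma const_of_hasDerivAt_zero {G : Type*} [NormedAddCommGroup G] [NormedSpace ℝ G]
    {f : ℝ → G} (h : ∀ t, HasDerivAt f 0 t) (a b : ℝ) : f a = f b := by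
  apply is_const_of_fderiv_eq_zero (fun t => (h t).differentiableAt)
  intro t
  rw [(h t).hasFDerivAt.fderiv]
  ext
  simp

end Helpers

/-- **Integrals of motion of the dynamical system (D).**
If `(q₀,…,q₅)` are differentiable and obey the controlled dynamics (D) generated by the
twice continuously differentiable data functions `g₀, g` of Problem (N), and if at some
time `t₀` the identities `q₃ = -∇_{q₁}L`, `q₄ = g(q₁)`, `q₅ = g₀(q₁)` hold, then they hold
for all times: every evolution of (D) started on the hypersurface defined by these three
integrals of motion remains on it. Here `∇_{q₁}L(a,x,y) = a • ∇g₀(x) + (Dg(x))ᵀ y` is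
encoded by `gradL`, the Hessian `∂²_{q₁}L` as the Fréchet derivative of `x ↦ gradL a x y`,
and `(Dg)ᵀ` as the adjoint of the Fréchet derivative of `g`. -/
theorem integrals_of_motion_of_D {n m : ℕ}
    (g₀ : EuclideanSpace ℝ (Fin n) → ℝ)
    (g : EuclideanSpace ℝ (Fin n) → EuclideanSpace ℝ (Fin m))
    (hg₀ : ContDiff ℝ 2 g₀) (hg : ContDiff ℝ 2 g)
    (gradL : ℝ → EuclideanSpace ℝ (Fin n) → EuclideanSpace ℝ (Fin m) →
      EuclideanSpace ℝ (Fin n))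
    (hgradL : ∀ a x y, gradL a x y =
      a • gradient g₀ x + ContinuousLinearMap.adjoint (fderiv ℝ g x) y)
    (q₀ : ℝ → ℝ) (q₁ : ℝ → EuclideanSpace ℝ (Fin n)) (q₂ : ℝ → EuclideanSpace ℝ (Fin m))
    (q₃ : ℝ → EuclideanSpace ℝ (Fin n)) (q₄ : ℝ → EuclideanSpace ℝ (Fin m)) (q₅ : ℝ → ℝ)
    (u₀ : ℝ → ℝ) (u₁ : ℝ → EuclideanSpace ℝ (Fin n)) (u₂ : ℝ → EuclideanSpace ℝ (Fin m))
    (hq₀ : ∀ t, HasDerivAt q₀ (u₀ t) t)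
    (hq₁ : ∀ t, HasDerivAt q₁ (u₁ t) t)
    (hq₂ : ∀ t, HasDerivAt q₂ (u₂ t) t)
    (hq₃ : ∀ t, HasDerivAt q₃
      (-(fderiv ℝ (fun x => gradL (q₀ t) x (q₂ t)) (q₁ t) (u₁ t))
        - u₀ t • gradient g₀ (q₁ t)
        - ContinuousLinearMap.adjoint (fderiv ℝ g (q₁ t)) (u₂ t)) t)
    (hq₄ : ∀ t, HasDerivAt q₄ (fderiv ℝ g (q₁ t) (u₁ t)) t)
    (hq₅ : ∀ t, HasDerivAt q₅ ⟪gradient g₀ (q₁ t), u₁ t⟫ t)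
    (t₀ : ℝ)
    (hinit₃ : q₃ t₀ = -gradL (q₀ t₀) (q₁ t₀) (q₂ t₀))
    (hinit₄ : q₄ t₀ = g (q₁ t₀))
    (hinit₅ : q₅ t₀ = g₀ (q₁ t₀)) :
    ∀ t : ℝ,
      q₃ t + gradL (q₀ t) (q₁ t) (q₂ t) = 0 ∧
      q₄ t = g (q₁ t) ∧
      q₅ t = g₀ (q₁ t) := by
  have hg₀d : Differentiable ℝ g₀ := hg₀.differentiable (by norm_num)
  have hgd : Differentiable ℝ g := hg.differentiable (by norm_num)
  -- smoothness of the gradient map G and the adjoint-of-derivative map B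
  set G : EuclideanSpace ℝ (Fin n) → EuclideanSpace ℝ (Fin n) := fun x => gradient g₀ x with hGdef
  set B : EuclideanSpace ℝ (Fin n) → (EuclideanSpace ℝ (Fin m) →L[ℝ] EuclideanSpace ℝ (Fin n)) := fun x => ContinuousLinearMap.adjoint (fderiv ℝ g x) with hBdef
  have hGc : ContDiff ℝ 1 G := by
    have : G = fun x => dualSymmCLM (EuclideanSpace ℝ (Fin n)) (fderiv ℝ g₀ x) := by
      funext x; exact gradient_eq_dualSymmCLM g₀ x
    rw [this]
    exact (dualSymmCLM (EuclideanSpace ℝ (Fin n))).contDiff.comp (hg₀.fderiv_right (by norm_num))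
  have hBc : ContDiff ℝ 1 B := by
    have : B = fun x => adjCLM _ _ (fderiv ℝ g x) := by funext x; rfl
    rw [this]
    exact (adjCLM (EuclideanSpace ℝ (Fin n)) (EuclideanSpace ℝ (Fin m))).contDiff.comp (hg.fderiv_right (by norm_num))
  have hGd : ∀ x : EuclideanSpace ℝ (Fin n), HasFDerivAt G (fderiv ℝ G x) x :=
    fun x => (hGc.differentiable (by norm_num) x).hasFDerivAt
  have hBd : ∀ x : EuclideanSpace ℝ (Fin n), HasFDerivAt B (fderiv ℝ B x) x :=
    fun x => (hBc.differentiable (by norm_num) x).hasFDerivAt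
  -- the inner fderiv appearing in hq₃, computed explicitly
  have key2 : ∀ (a : ℝ) (y : EuclideanSpace ℝ (Fin m)) (x₀ u : EuclideanSpace ℝ (Fin n)),
      fderiv ℝ (fun x => gradL a x y) x₀ u
        = a • fderiv ℝ G x₀ u + (fderiv ℝ B x₀ u) y := by
    intro a y x₀ u
    have h1 : HasFDerivAt (fun x => gradL a x y)
        (a • fderiv ℝ G x₀ + (fderiv ℝ B x₀).flip y) x₀ := by
      have : (fun x => gradL a x y) = fun x => a • G x + (B x) y := by
        funext x; rw [hgradL]
      rw [this]
      have hB' : HasFDerivAt (fun x => (B x) y)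
          ((B x₀).comp (0 : EuclideanSpace ℝ (Fin n) →L[ℝ] EuclideanSpace ℝ (Fin m)) + (fderiv ℝ B x₀).flip y) x₀ :=
        (hBd x₀).clm_apply (hasFDerivAt_const y x₀)
      exact (((hGd x₀).const_smul a).add hB').congr_fderiv (by simp)
    rw [h1.fderiv]
    simp
  -- derivative of t ↦ gradL (q₀ t) (q₁ t) (q₂ t)
  have key : ∀ t, HasDerivAt (fun s => gradL (q₀ s) (q₁ s) (q₂ s))
      (q₀ t • fderiv ℝ G (q₁ t) (u₁ t) + u₀ t • G (q₁ t)
        + ((fderiv ℝ B (q₁ t) (u₁ t)) (q₂ t) + (B (q₁ t)) (u₂ t))) t := by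
    intro t
    have hfun : (fun s => gradL (q₀ s) (q₁ s) (q₂ s))
        = fun s => q₀ s • G (q₁ s) + (B (q₁ s)) (q₂ s) := by
      funext s; rw [hgradL]
    rw [hfun]
    exact ((hq₀ t).smul ((hGd (q₁ t)).comp_hasDerivAt t (hq₁ t))).add
      (((hBd (q₁ t)).comp_hasDerivAt t (hq₁ t)).clm_apply (hq₂ t))
  -- first integral of motion
  have int3 : ∀ t, q₃ t + gradL (q₀ t) (q₁ t) (q₂ t) = 0 := by
    have hzero : ∀ t, HasDerivAt (fun s => q₃ s + gradL (q₀ s) (q₁ s) (q₂ s)) 0 t := by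
      intro t
      have h := (hq₃ t).add (key t)
      have heq : (-(fderiv ℝ (fun x => gradL (q₀ t) x (q₂ t)) (q₁ t) (u₁ t))
            - u₀ t • gradient g₀ (q₁ t)
            - ContinuousLinearMap.adjoint (fderiv ℝ g (q₁ t)) (u₂ t))
          + (q₀ t • fderiv ℝ G (q₁ t) (u₁ t) + u₀ t • G (q₁ t)
            + ((fderiv ℝ B (q₁ t) (u₁ t)) (q₂ t) + (B (q₁ t)) (u₂ t)))
          = 0 := by
        rw [key2 (q₀ t) (q₂ t) (q₁ t) (u₁ t)]
        show _ - u₀ t • G (q₁ t) - (B (q₁ t)) (u₂ t) + _ = 0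
        abel
      rwa [heq] at h
    intro t
    have := const_of_hasDerivAt_zero hzero t t₀
    rw [this, hinit₃]
    abel
  -- second integral of motion
  have int4 : ∀ t, q₄ t = g (q₁ t) := by
    have hzero : ∀ t, HasDerivAt (fun s => q₄ s - g (q₁ s)) 0 t := by
      intro t
      have h := (hq₄ t).sub ((hgd (q₁ t)).hasFDerivAt.comp_hasDerivAt t (hq₁ t))
      exact h.congr_deriv (by simp)
    intro t
    have := const_of_hasDerivAt_zero hzero t t₀
    have h0 : q₄ t₀ - g (q₁ t₀) = 0 := by rw [hinit₄]; abel
    rw [h0] at this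
    exact sub_eq_zero.mp this
  -- third integral of motion
  have int5 : ∀ t, q₅ t = g₀ (q₁ t) := by
    have hzero : ∀ t, HasDerivAt (fun s => q₅ s - g₀ (q₁ s)) 0 t := by
      intro t
      have hcomp : HasDerivAt (fun s => g₀ (q₁ s)) (fderiv ℝ g₀ (q₁ t) (u₁ t)) t :=
        (hg₀d (q₁ t)).hasFDerivAt.comp_hasDerivAt t (hq₁ t)
      have h := (hq₅ t).sub hcomp
      rw [inner_gradient_eq] at h
      exact h.congr_deriv (by simp)
    intro t
    have := const_of_hasDerivAt_zero hzero t t₀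
    have h0 : q₅ t₀ - g₀ (q₁ t₀) = 0 := by rw [hinit₅]; ring
    rw [h0] at this
    exact sub_eq_zero.mp this
  exact fun t => ⟨int3 t, int4 t, int5 t⟩
end

section
/- Let F : ℝᴺ × ℝᴹ → ℝᴺ, let U : ℝᴺ × ℝ → Set(ℝᴹ), let 𝓛 : ℝᴺ × ℝᴹ × ℝ → ℝ, let ℓ : ℝᴺ × ℝ → ℝ, let T ⊆ ℝᴺ, let t₀ ∈ ℝ and q⁰⁰ ∈ ℝᴺ. Call a triple (q, u, t_f) feasible if t_f ≥ t₀, q : ℝ → ℝᴺ is continuously differentiable on [t₀, t_f], u : ℝ → ℝᴹ satisfies u(t) ∈ U(q(t), t) and q'(t) = F(q(t), u(t)) for all t ∈ [t₀, t_f], the map t ↦ 𝓛(q(t), u(t), t) is integrable on [t₀, t_f], q(t₀) = q⁰⁰ and q(t_f) ∈ T; and define its cost J := ℓ(q(t_f), t_f) + ∫_{t₀}^{t_f} 𝓛(q(t), u(t), t) dt. Suppose there exists a continuously differentiable function φ : ℝᴺ × ℝ → ℝ such that: (i) for all q ∈ ℝᴺ, all t ∈ ℝ and all u ∈ U(q,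 t), 𝓛(q, u, t) + ⟨∂_q φ(q, t), F(q, u)⟩ + ∂_t φ(q, t) ≥ 0; (ii) φ(q, t) = ℓ(q, t) for all q ∈ T and all t ∈ ℝ; and (iii) there exists a feasible triple (q♭, u♭, t_f♭) whose cost J♭ equals φ(q⁰⁰, t₀). Then every feasible triple (q, u, t_f) has cost J ≥ J♭; that is, (q♭, u♭, t_f♭) is optimal and the optimal value is φ(q⁰⁰, t₀). -/
open scoped RealInnerProductSpace

/-- A triple `(q, u, t_f)` is feasible for the optimal control problem (M) with data
`(t₀, q⁰⁰, T, F, U, 𝓛)` if `t_f ≥ t₀`, `q` is continuously differentiable on `[t₀, t_f]`,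
the control constraint and the dynamics hold on `[t₀, t_f]`, the running cost is
integrable on `[t₀, t_f]`, and the boundary conditions `q(t₀) = q⁰⁰`, `q(t_f) ∈ T` hold. -/
def FeasibleTriple {N M : ℕ} (t₀ : ℝ) (q00 : EuclideanSpace ℝ (Fin N))
    (T : Set (EuclideanSpace ℝ (Fin N)))
    (F : EuclideanSpace ℝ (Fin N) → EuclideanSpace ℝ (Fin M) → EuclideanSpace ℝ (Fin N))
    (U : EuclideanSpace ℝ (Fin N) → ℝ → Set (EuclideanSpace ℝ (Fin M)))
    (𝓛 : EuclideanSpace ℝ (Fin N) → EuclideanSpace ℝ (Fin M) → ℝ → ℝ)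
    (q : ℝ → EuclideanSpace ℝ (Fin N)) (u : ℝ → EuclideanSpace ℝ (Fin M))
    (tf : ℝ) : Prop :=
  t₀ ≤ tf ∧
  ContDiffOn ℝ 1 q (Set.Icc t₀ tf) ∧
  (∀ t ∈ Set.Icc t₀ tf, u t ∈ U (q t) t) ∧
  (∀ t ∈ Set.Icc t₀ tf, HasDerivAt q (F (q t) (u t)) t) ∧
  MeasureTheory.IntegrableOn (fun t => 𝓛 (q t) (u t) t) (Set.Icc t₀ tf) ∧
  q t₀ = q00 ∧ q tf ∈ T

/-- The cost of a triple `(q, u, t_f)`: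
`J = ℓ(q(t_f), t_f) + ∫_{t₀}^{t_f} 𝓛(q(t), u(t), t) dt`. -/
noncomputable def costJ {N M : ℕ} (t₀ : ℝ)
    (ℓ : EuclideanSpace ℝ (Fin N) → ℝ → ℝ)
    (𝓛 : EuclideanSpace ℝ (Fin N) → EuclideanSpace ℝ (Fin M) → ℝ → ℝ)
    (q : ℝ → EuclideanSpace ℝ (Fin N)) (u : ℝ → EuclideanSpace ℝ (Fin M))
    (tf : ℝ) : ℝ :=
  ℓ (q tf) tf + ∫ t in t₀..tf, 𝓛 (q t) (u t) t

/-- **Verification theorem for optimal optimization (Theorem 4.9).**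
If there is a continuously differentiable `φ` satisfying (i) the pointwise Hamilton-Jacobi
inequality `𝓛(q,u,t) + ⟨∂_q φ(q,t), F(q,u)⟩ + ∂_t φ(q,t) ≥ 0` for all `q`, `t` and
`u ∈ U(q,t)`, (ii) the boundary condition `φ = ℓ` on `T`, and (iii) there is a feasible
triple `(q♭, u♭, t_f♭)` whose cost equals `φ(q⁰⁰, t₀)`, then every feasible triple has cost
at least that of `(q♭, u♭, t_f♭)`; i.e. `(q♭, u♭, t_f♭)` is optimal with optimal value
`φ(q⁰⁰, t₀)`. -/
theorem optimal_optimization_verification {N M : ℕ}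
    (t₀ : ℝ) (q00 : EuclideanSpace ℝ (Fin N))
    (T : Set (EuclideanSpace ℝ (Fin N)))
    (F : EuclideanSpace ℝ (Fin N) → EuclideanSpace ℝ (Fin M) → EuclideanSpace ℝ (Fin N))
    (U : EuclideanSpace ℝ (Fin N) → ℝ → Set (EuclideanSpace ℝ (Fin M)))
    (𝓛 : EuclideanSpace ℝ (Fin N) → EuclideanSpace ℝ (Fin M) → ℝ → ℝ)
    (ℓ : EuclideanSpace ℝ (Fin N) → ℝ → ℝ)
    (φ : EuclideanSpace ℝ (Fin N) → ℝ → ℝ)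
    (hφ : ContDiff ℝ 1 (fun p : EuclideanSpace ℝ (Fin N) × ℝ => φ p.1 p.2))
    (hHJI : ∀ (q : EuclideanSpace ℝ (Fin N)) (t : ℝ), ∀ u ∈ U q t,
      0 ≤ 𝓛 q u t + ⟪gradient (fun x => φ x t) q, F q u⟫ + deriv (φ q) t)
    (hbc : ∀ q ∈ T, ∀ t : ℝ, φ q t = ℓ q t)
    (qflat : ℝ → EuclideanSpace ℝ (Fin N)) (uflat : ℝ → EuclideanSpace ℝ (Fin M))
    (tfflat : ℝ)
    (hfeas : FeasibleTriple t₀ q00 T F U 𝓛 qflat uflat tfflat)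
    (hval : costJ t₀ ℓ 𝓛 qflat uflat tfflat = φ q00 t₀) :
    ∀ (q : ℝ → EuclideanSpace ℝ (Fin N)) (u : ℝ → EuclideanSpace ℝ (Fin M)) (tf : ℝ),
      FeasibleTriple t₀ q00 T F U 𝓛 q u tf →
      costJ t₀ ℓ 𝓛 qflat uflat tfflat ≤ costJ t₀ ℓ 𝓛 q u tf := by
  intro q u tf hQ
  obtain ⟨htf, hC1, hU, hODE, hInt, hq0, hqT⟩ := hQ
  rw [hval]
  rcases eq_or_lt_of_le htf with heq | hlt
  · have hT : q00 ∈ T := by rw [← hq0, heq]; exact hqT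
    have := hbc q00 hT t₀
    simp [costJ, ← heq, hq0, ← this]
  set Φ : EuclideanSpace ℝ (Fin N) × ℝ → ℝ := fun p => φ p.1 p.2 with hΦ
  have hΦdiff : Differentiable ℝ Φ := hφ.differentiable one_ne_zero
  set g' : ℝ → ℝ := fun t => (fderiv ℝ Φ (q t, t)) (F (q t) (u t), 1) with hg'def
  have hg : ∀ t ∈ Set.Icc t₀ tf, HasDerivAt (fun s => φ (q s) s) (g' t) t := by
    intro t ht
    have hDq : HasDerivAt (fun s => (q s, s)) (F (q t) (u t), (1 : ℝ)) t :=
      (hODE t ht).prodMk (hasDerivAt_id t)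
    exact HasFDerivAt.comp_hasDerivAt (l := Φ) (f := fun s => (q s, s)) t
      (hΦdiff (q t, t)).hasFDerivAt hDq
  have hgrad : ∀ (t : ℝ) (x : EuclideanSpace ℝ (Fin N)) (v : EuclideanSpace ℝ (Fin N)),
      ⟪gradient (fun y => φ y t) x, v⟫ = fderiv ℝ Φ (x, t) (v, 0) := by
    intro t x v
    have hx : HasFDerivAt (fun y : EuclideanSpace ℝ (Fin N) => (y, t))
        (ContinuousLinearMap.inl ℝ (EuclideanSpace ℝ (Fin N)) ℝ) x :=
      hasFDerivAt_prodMk_left x t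
    have h1 : HasFDerivAt (fun y => φ y t)
        ((fderiv ℝ Φ (x, t)).comp (ContinuousLinearMap.inl ℝ (EuclideanSpace ℝ (Fin N)) ℝ)) x :=
      by have := (hΦdiff (x, t)).hasFDerivAt.comp x hx; exact this
    have h2 := hasFDerivAt_iff_hasGradientAt.mp h1
    rw [h2.gradient, InnerProductSpace.toDual_symm_apply]
    simp
  have hpartt : ∀ (x : EuclideanSpace ℝ (Fin N)) (t : ℝ),
      HasDerivAt (φ x) (fderiv ℝ Φ (x, t) (0, 1)) t := by
    intro x t
    have hD : HasDerivAt (fun s : ℝ => ((x, s) : EuclideanSpace ℝ (Fin N) × ℝ))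
        ((0 : EuclideanSpace ℝ (Fin N)), (1 : ℝ)) t :=
      (hasDerivAt_const t x).prodMk (hasDerivAt_id t)
    exact (hΦdiff (x, t)).hasFDerivAt.comp_hasDerivAt t hD
  have hsplit : ∀ t : ℝ,
      g' t = ⟪gradient (fun y => φ y t) (q t), F (q t) (u t)⟫ + deriv (φ (q t)) t := by
    intro t
    rw [hgrad, (hpartt (q t) t).deriv, hg'def]
    have hsum : ((F (q t) (u t), (1 : ℝ)) : EuclideanSpace ℝ (Fin N) × ℝ)
        = (F (q t) (u t), 0) + (0, 1) := by simp
    show (fderiv ℝ Φ (q t, t)) (F (q t) (u t), 1) = _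
    rw [hsum, map_add]
  have key : ∀ t ∈ Set.Icc t₀ tf, 0 ≤ 𝓛 (q t) (u t) t + g' t := by
    intro t ht
    have h0 := hHJI (q t) t (u t) (hU t ht)
    rw [hsplit t]
    linarith
  have hqc : ContinuousOn q (Set.Icc t₀ tf) := hC1.continuousOn
  have hud : UniqueDiffOn ℝ (Set.Icc t₀ tf) := uniqueDiffOn_Icc hlt
  have hq'c : ContinuousOn (fun t => derivWithin q (Set.Icc t₀ tf) t) (Set.Icc t₀ tf) :=
    hC1.continuousOn_derivWithin hud le_rfl
  have hderivW : ∀ t ∈ Set.Icc t₀ tf, derivWithin q (Set.Icc t₀ tf) t = F (q t) (u t) :=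
    fun t ht => ((hODE t ht).hasDerivWithinAt).derivWithin (hud t ht)
  have hFc : ContinuousOn (fun t => F (q t) (u t)) (Set.Icc t₀ tf) :=
    hq'c.congr fun t ht => (hderivW t ht).symm
  have hfderivc : ContinuousOn (fun t => fderiv ℝ Φ (q t, t)) (Set.Icc t₀ tf) :=
    (hφ.continuous_fderiv one_ne_zero).comp_continuousOn (hqc.prodMk continuousOn_id)
  have hg'c : ContinuousOn g' (Set.Icc t₀ tf) :=
    hfderivc.clm_apply (hFc.prodMk continuousOn_const)
  have huIcc : Set.uIcc t₀ tf = Set.Icc t₀ tf := Set.uIcc_of_le htf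
  have hg'int : IntervalIntegrable g' MeasureTheory.volume t₀ tf :=
    (huIcc ▸ hg'c).intervalIntegrable
  have h𝓛int : IntervalIntegrable (fun t => 𝓛 (q t) (u t) t) MeasureTheory.volume t₀ tf :=
    (huIcc ▸ hInt).intervalIntegrable
  have hFTC : ∫ t in t₀..tf, g' t = φ (q tf) tf - φ (q t₀) t₀ :=
    intervalIntegral.integral_eq_sub_of_hasDerivAt
      (fun t ht => hg t (huIcc ▸ ht)) hg'int
  have hpos : 0 ≤ ∫ t in t₀..tf, (𝓛 (q t) (u t) t + g' t) :=
    intervalIntegral.integral_nonneg htf key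
  rw [intervalIntegral.integral_add h𝓛int hg'int, hFTC] at hpos
  have hbdy : φ (q tf) tf = ℓ (q tf) tf := hbc (q tf) hqT tf
  rw [hq0] at hpos
  simp only [costJ]
  linarith
end

section
/- Let B be an m×n real matrix and define M := [[0, −Bᵀ],[B, 0]] (an (n+m)×(n+m) block matrix). Then M is skew-symmetric and for every x₀ ∈ ℝ^{n+m} and every t ∈ ℝ, ‖exp(−t·Mᵀ)·x₀‖ = ‖x₀‖ in the Euclidean norm. Consequently, if x₀ ≠ 0, the solution t ↦ exp(−t·Mᵀ)·x₀ of the residual dynamics x' = −Mᵀ x does not converge to 0 as t → ∞; that is, the Arrow–Hurwicz–Uzawa algorithm is not convergent for linear programming problems. -/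
open Matrix Filter

/-- **The Arrow–Hurwicz–Uzawa algorithm is not convergent for linear programming
problems (Theorem 6.4).**
For a linear program, the Hessian of the Lagrangian vanishes, so the asymmetric KKT
matrix reduces to `M = [[0, -Bᵀ],[B, 0]]`. Then `M` is skew-symmetric, the solution
`t ↦ exp(-t Mᵀ) x₀` of the residual dynamics `x' = -Mᵀ x` has constant Euclidean norm
`‖x₀‖`, and consequently, for `x₀ ≠ 0`, it does not converge to `0` as `t → ∞`. -/
theorem ahu_not_convergent_for_LP {n m : ℕ}
    (B : Matrix (Fin m) (Fin n) ℝ)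
    (M : Matrix (Fin n ⊕ Fin m) (Fin n ⊕ Fin m) ℝ)
    (hM : M = Matrix.fromBlocks 0 (-Bᵀ) B 0) :
    Mᵀ = -M ∧
    (∀ (x₀ : Fin n ⊕ Fin m → ℝ) (t : ℝ),
      ‖(WithLp.equiv 2 ((Fin n ⊕ Fin m) → ℝ)).symm (NormedSpace.exp ((-t) • Mᵀ) *ᵥ x₀)‖
        = ‖(WithLp.equiv 2 ((Fin n ⊕ Fin m) → ℝ)).symm x₀‖) ∧
    (∀ x₀ : Fin n ⊕ Fin m → ℝ, x₀ ≠ 0 →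
      ¬ Tendsto (fun t : ℝ => NormedSpace.exp ((-t) • Mᵀ) *ᵥ x₀) atTop (nhds 0)) := by
  have hskew : Mᵀ = -M := by
    subst hM
    simp [Matrix.fromBlocks_transpose, Matrix.fromBlocks_neg]
  -- key orthogonality: exp(A)ᵀ * exp(A) = 1 for A = (-t) • Mᵀ
  have key : ∀ t : ℝ,
      (NormedSpace.exp ((-t) • Mᵀ))ᵀ * NormedSpace.exp ((-t) • Mᵀ) = 1 := by
    intro t
    have hA : ((-t) • Mᵀ)ᵀ = -((-t) • Mᵀ) := by
      simp [Matrix.transpose_smul, hskew]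
    rw [← Matrix.exp_transpose, hA,
      ← Matrix.exp_add_of_commute (-((-t) • Mᵀ)) ((-t) • Mᵀ) (Commute.neg_left (Commute.refl _)),
      neg_add_cancel, NormedSpace.exp_zero]
  -- norm preservation
  have hnorm : ∀ (x₀ : Fin n ⊕ Fin m → ℝ) (t : ℝ),
      ‖(WithLp.equiv 2 ((Fin n ⊕ Fin m) → ℝ)).symm (NormedSpace.exp ((-t) • Mᵀ) *ᵥ x₀)‖
        = ‖(WithLp.equiv 2 ((Fin n ⊕ Fin m) → ℝ)).symm x₀‖ := by
    intro x₀ t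
    set P := NormedSpace.exp ((-t) • Mᵀ) with hP
    have hdot : (P *ᵥ x₀) ⬝ᵥ (P *ᵥ x₀) = x₀ ⬝ᵥ x₀ := by
      rw [Matrix.dotProduct_mulVec, ← Matrix.mulVec_transpose, Matrix.mulVec_mulVec, key t,
        Matrix.one_mulVec]
    have h1 : ∑ i, (P *ᵥ x₀) i ^ 2 = ∑ i, x₀ i ^ 2 := by
      simpa [dotProduct, sq] using hdot
    rw [EuclideanSpace.norm_eq, EuclideanSpace.norm_eq]
    simp only [WithLp.equiv_symm_apply, WithLp.ofLp_toLp, Real.norm_eq_abs, sq_abs]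
    rw [h1]
  refine ⟨hskew, hnorm, ?_⟩
  intro x₀ hx₀ htend
  -- transport to EuclideanSpace, where the norm is constant ‖x₀‖ ≠ 0
  have hcont : Continuous ((WithLp.equiv 2 ((Fin n ⊕ Fin m) → ℝ)).symm) :=
    (PiLp.continuousLinearEquiv 2 ℝ (fun _ : Fin n ⊕ Fin m => ℝ)).symm.continuous
  have h2 : Tendsto (fun t : ℝ =>
      ‖(WithLp.equiv 2 ((Fin n ⊕ Fin m) → ℝ)).symm (NormedSpace.exp ((-t) • Mᵀ) *ᵥ x₀)‖)
      atTop (nhds 0) := by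
    have := (hcont.tendsto 0).comp htend
    simpa using this.norm
  have h3 : Tendsto (fun _ : ℝ =>
      ‖(WithLp.equiv 2 ((Fin n ⊕ Fin m) → ℝ)).symm x₀‖) atTop (nhds 0) := by
    refine h2.congr fun t => hnorm x₀ t
  have h4 : ‖(WithLp.equiv 2 ((Fin n ⊕ Fin m) → ℝ)).symm x₀‖ = 0 :=
    tendsto_nhds_unique tendsto_const_nhds h3
  exact hx₀ (by simpa using norm_eq_zero.mp h4)
end

section
/- Let H be an n×n real symmetric positive definite matrix and B an m×n real matrix of full rank m. Define S_H := B H⁻¹ Bᵀ and let λ_min denote the smallest eigenvalue of H. If λ_min ≥ 4‖S_H‖₂, where ‖·‖₂ denotes the spectral (operator 2-) norm, then every eigenvalue over ℂ of the asymmetric saddle-point matrix K_A := [[H, −Bᵀ],[B, 0]] is real and strictly positive. -/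
open Matrix Complex ComplexOrder
set_option linter.unusedSectionVars false

namespace BenziAux

variable {I J : Type*} [Fintype I] [Fintype J] [DecidableEq I] [DecidableEq J]

/-- complexification -/
noncomputable def mc (M : Matrix I J ℝ) : Matrix I J ℂ := M.map Complex.ofRealHom

lemma mc_mul {K : Type*} [Fintype K] (M : Matrix I J ℝ) (N : Matrix J K ℝ) :
    mc (M * N) = mc M * mc N := Matrix.map_mul

lemma mc_transpose (M : Matrix I J ℝ) : mc Mᵀ = (mc M)ᵀ := Matrix.transpose_map

lemma mc_conjTranspose (M : Matrix I J ℝ) : (mc M)ᴴ = mc Mᵀ := by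
  ext i j
  simp [mc, conjTranspose_apply, Complex.conj_ofReal]

lemma mc_star_mulVec (M : Matrix I J ℝ) (x : J → ℂ) :
    star (mc M *ᵥ x) = mc M *ᵥ star x := by
  ext i
  simp [mc, mulVec, dotProduct, Complex.conj_ofReal]

open scoped MatrixOrder in
lemma mc_posSemidef {M : Matrix I I ℝ} (hM : M.PosSemidef) : (mc M).PosSemidef := by
  obtain ⟨R, hR⟩ : ∃ R : Matrix I I ℝ, M = Rᴴ * R :=
    ⟨CFC.sqrt M, by rw [(nonneg_iff_posSemidef.mp (CFC.sqrt_nonneg M)).1.eq,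
      CFC.sqrt_mul_sqrt_self M (nonneg_iff_posSemidef.mpr hM)]⟩
  have h2 : mc M = (mc R)ᴴ * mc R := by
    rw [mc_conjTranspose, ← mc_mul]
    rw [conjTranspose_eq_transpose_of_trivial] at hR
    exact congrArg mc hR
  rw [h2]
  exact posSemidef_conjTranspose_mul_self _

lemma mc_det (M : Matrix I I ℝ) : (mc M).det = (M.det : ℂ) := by
  rw [mc, ← RingHom.mapMatrix_apply, ← RingHom.map_det]
  rfl

lemma mc_posDef {M : Matrix I I ℝ} (hM : M.PosDef) : (mc M).PosDef := by
  have psd := mc_posSemidef hM.posSemidef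
  refine posDef_iff_dotProduct_mulVec.mpr ⟨psd.1, fun x hx => ?_⟩
  refine lt_of_le_of_ne (psd.dotProduct_mulVec_nonneg x) (Ne.symm ?_)
  rw [Ne, psd.dotProduct_mulVec_zero_iff]
  intro h
  have hdet : (mc M).det ≠ 0 := by
    rw [mc_det]
    exact_mod_cast hM.det_pos.ne'
  exact hdet ((Matrix.exists_mulVec_eq_zero_iff).mp ⟨x, hx, h⟩)

end BenziAux

namespace BenziAux2
open BenziAux

variable {I J : Type*} [Fintype I] [Fintype J] [DecidableEq I] [DecidableEq J]

lemma mc_sub (M N : Matrix I J ℝ) : mc (M - N) = mc M - mc N := by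
  ext i j; simp [mc]

lemma mc_smul_one (t : ℝ) : mc (t • (1 : Matrix I I ℝ)) = (t : ℂ) • 1 := by
  ext i j
  by_cases h : i = j <;> simp [mc, one_apply, h]

lemma mc_smul (t : ℝ) (M : Matrix I J ℝ) : mc (t • M) = (t : ℂ) • mc M := by
  ext i j; simp [mc]

/-- shift lemma : if all eigenvalues of a real symmetric `M` are `≥ t` then `M - t•1` is PSD. -/
lemma shift_posSemidef {M : Matrix I I ℝ} (hM : M.IsHermitian) (t : ℝ)
    (h : ∀ i, t ≤ hM.eigenvalues i) : (M - t • (1 : Matrix I I ℝ)).PosSemidef := by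
  have hspec := hM.spectral_theorem
  set U : Matrix I I ℝ := (hM.eigenvectorUnitary : Matrix I I ℝ) with hU
  have hUU : U * star U = 1 := Matrix.mem_unitaryGroup_iff.mp hM.eigenvectorUnitary.2
  have h1 : (t • (1 : Matrix I I ℝ)) = U * (t • 1) * star U := by
    rw [Matrix.mul_smul, Matrix.smul_mul, mul_one, hUU]
  have h2 : M - t • (1 : Matrix I I ℝ)
      = U * (diagonal (RCLike.ofReal ∘ hM.eigenvalues) - t • 1) * star U := by
    rw [Matrix.mul_sub, Matrix.sub_mul, ← h1]
    congr 1
  rw [h2]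
  have h3 : (diagonal (RCLike.ofReal ∘ hM.eigenvalues) - t • (1 : Matrix I I ℝ))
      = diagonal (fun i => hM.eigenvalues i - t) := by
    rw [smul_one_eq_diagonal, diagonal_sub]
    rfl
  rw [h3, Matrix.star_eq_conjTranspose]
  exact (Matrix.PosSemidef.diagonal (fun i => by simpa using h i)).mul_mul_conjTranspose_same U

end BenziAux2

namespace BenziAux3
open BenziAux

lemma transpose_mulVec_injective {m n : ℕ} (B : Matrix (Fin m) (Fin n) ℝ)
    (hB : B.rank = m) : Function.Injective (Bᵀ.mulVecLin) := by
  have hrk : Bᵀ.rank = m := by rw [Matrix.rank_transpose]; exact hB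
  rw [← LinearMap.ker_eq_bot]
  have hrn := LinearMap.finrank_range_add_finrank_ker (Bᵀ.mulVecLin)
  rw [Module.finrank_pi] at hrn
  have h2 : Module.finrank ℝ (LinearMap.range Bᵀ.mulVecLin) = m := hrk
  rw [h2] at hrn
  have hcard : Fintype.card (Fin m) = m := Fintype.card_fin m
  have h3 : Module.finrank ℝ (LinearMap.ker Bᵀ.mulVecLin) = 0 := by omega
  exact Submodule.finrank_eq_zero.mp h3

lemma dotProduct_self_nonneg' {k : Type*} [Fintype k] (v : k → ℝ) : 0 ≤ v ⬝ᵥ v :=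
  Finset.sum_nonneg fun i _ => mul_self_nonneg _

lemma mul_transpose_posDef {m n : ℕ} (B : Matrix (Fin m) (Fin n) ℝ)
    (hB : B.rank = m) : (B * Bᵀ).PosDef := by
  have hherm : (B * Bᵀ).IsHermitian := by
    have := Matrix.isHermitian_mul_conjTranspose_self B
    rwa [conjTranspose_eq_transpose_of_trivial] at this
  refine posDef_iff_dotProduct_mulVec.mpr ⟨hherm, fun u hu => ?_⟩
  have h1 : star u ⬝ᵥ (B * Bᵀ) *ᵥ u = (Bᵀ *ᵥ u) ⬝ᵥ (Bᵀ *ᵥ u) := by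
    rw [star_trivial, ← Matrix.mulVec_mulVec, Matrix.dotProduct_mulVec,
      ← Matrix.mulVec_transpose]
  rw [h1]
  rcases (dotProduct_self_nonneg' (Bᵀ *ᵥ u)).lt_or_eq with h | h
  · exact h
  · exfalso
    have h0 : Bᵀ *ᵥ u = 0 := dotProduct_self_eq_zero.mp h.symm
    have := transpose_mulVec_injective B hB (a₁ := u) (a₂ := 0)
      (by simp only [Matrix.mulVecLin_apply, Matrix.mulVec_zero]; exact h0)
    exact hu this

end BenziAux3

namespace BenziAux4
open BenziAux BenziAux3

lemma dot_le_norm {k : ℕ} (S : Matrix (Fin k) (Fin k) ℝ) (u : Fin k → ℝ) :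
    u ⬝ᵥ (S *ᵥ u) ≤ ‖Matrix.toEuclideanCLM (𝕜 := ℝ) S‖ * (u ⬝ᵥ u) := by
  set T := Matrix.toEuclideanCLM (𝕜 := ℝ) S with hT
  set u' : EuclideanSpace ℝ (Fin k) := (WithLp.equiv 2 _).symm u with hu'
  have h1 : u ⬝ᵥ (S *ᵥ u) = inner ℝ u' (T u') := by
    rw [hT, hu', WithLp.equiv_symm_apply, Matrix.toEuclideanCLM_toLp,
      EuclideanSpace.inner_toLp_toLp, star_trivial, dotProduct_comm]
  have h2 : u ⬝ᵥ u = ‖u'‖ * ‖u'‖ := by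
    rw [← real_inner_self_eq_norm_mul_norm, hu', WithLp.equiv_symm_apply,
      EuclideanSpace.inner_toLp_toLp, star_trivial]
  rw [h1, h2]
  calc inner ℝ u' (T u') ≤ ‖u'‖ * ‖T u'‖ := real_inner_le_norm _ _
    _ ≤ ‖u'‖ * (‖T‖ * ‖u'‖) := by
        exact mul_le_mul_of_nonneg_left (T.le_opNorm u') (norm_nonneg _)
    _ = ‖T‖ * (‖u'‖ * ‖u'‖) := by ring

lemma cs_sq {k : ℕ} (v w : Fin k → ℝ) : (v ⬝ᵥ w)^2 ≤ (v ⬝ᵥ v) * (w ⬝ᵥ w) := by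
  have := real_inner_mul_inner_self_le ((WithLp.equiv 2 (Fin k → ℝ)).symm v)
    ((WithLp.equiv 2 (Fin k → ℝ)).symm w)
  simp only [WithLp.equiv_symm_apply, EuclideanSpace.inner_toLp_toLp, star_trivial] at this
  rw [dotProduct_comm w v] at this
  nlinarith [this]

lemma dot_tr {k l : ℕ} (M : Matrix (Fin k) (Fin l) ℝ) (u : Fin k → ℝ) :
    (Mᵀ *ᵥ u) ⬝ᵥ (Mᵀ *ᵥ u) = u ⬝ᵥ ((M * Mᵀ) *ᵥ u) := by
  rw [← Matrix.mulVec_mulVec, Matrix.dotProduct_mulVec u, ← Matrix.mulVec_transpose]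

open scoped MatrixOrder in
lemma key_psd {n m : ℕ}
    (H : Matrix (Fin n) (Fin n) ℝ) (hH : H.PosDef)
    (B : Matrix (Fin m) (Fin n) ℝ)
    (SH : Matrix (Fin m) (Fin m) ℝ) (hSH : SH = B * H⁻¹ * Bᵀ) :
    ((‖Matrix.toEuclideanCLM (𝕜 := ℝ) SH‖) • H - Bᵀ * B).PosSemidef := by
  set c := ‖Matrix.toEuclideanCLM (𝕜 := ℝ) SH‖ with hc'
  have hc : 0 ≤ c := norm_nonneg _
  set R := CFC.sqrt H with hR'
  have hRR : R * R = H :=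
    CFC.sqrt_mul_sqrt_self H (nonneg_iff_posSemidef.mpr hH.posSemidef)
  have hRher : R.IsHermitian :=
    (nonneg_iff_posSemidef.mp (CFC.sqrt_nonneg H)).1
  have hRT : Rᵀ = R := by
    rw [← conjTranspose_eq_transpose_of_trivial]; exact hRher
  have hdet : IsUnit R.det := by
    have hd : R.det * R.det = H.det := by rw [← Matrix.det_mul, hRR]
    have hH0 := hH.det_pos
    refine isUnit_iff_ne_zero.mpr (fun h => ?_)
    rw [h, mul_zero] at hd
    exact hH0.ne' hd.symm
  set A := B * R⁻¹ with hA'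
  have hAT : Aᵀ = R⁻¹ * Bᵀ := by
    rw [hA', Matrix.transpose_mul, Matrix.transpose_nonsing_inv, hRT]
  have hSH' : A * Aᵀ = SH := by
    rw [hAT, hA', hSH]
    have hHinv : H⁻¹ = R⁻¹ * R⁻¹ := by rw [← hRR, Matrix.mul_inv_rev]
    rw [hHinv]
    simp only [Matrix.mul_assoc]
  have claim2 : ∀ u : Fin m → ℝ, (Aᵀ *ᵥ u) ⬝ᵥ (Aᵀ *ᵥ u) ≤ c * (u ⬝ᵥ u) := by
    intro u
    rw [dot_tr, hSH']
    exact dot_le_norm SH u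
  have claim3 : ∀ w : Fin n → ℝ, (A *ᵥ w) ⬝ᵥ (A *ᵥ w) ≤ c * (w ⬝ᵥ w) := by
    intro w
    set p := A *ᵥ w with hp'
    have hpw : p ⬝ᵥ p = (Aᵀ *ᵥ p) ⬝ᵥ w := by
      rw [hp', Matrix.dotProduct_mulVec, ← Matrix.mulVec_transpose]
    have hcs : ((Aᵀ *ᵥ p) ⬝ᵥ w)^2 ≤ ((Aᵀ *ᵥ p) ⬝ᵥ (Aᵀ *ᵥ p)) * (w ⬝ᵥ w) := cs_sq _ _
    have h2 := claim2 p
    have hpp : 0 ≤ p ⬝ᵥ p := dotProduct_self_nonneg' p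
    have hww : 0 ≤ w ⬝ᵥ w := dotProduct_self_nonneg' w
    rcases hpp.lt_or_eq with hpos | hzero
    · nlinarith [hcs, h2, hpw, hpos, hww]
    · rw [← hzero]
      exact mul_nonneg hc hww
  refine posSemidef_iff_dotProduct_mulVec.mpr ⟨?_, ?_⟩
  · have hsym : ∀ i j, H j i = H i j := fun i j => by
      conv_lhs => rw [← hH.1]
      simp [conjTranspose_apply]
    have h1 : (c • H).IsHermitian := by
      show (c • H)ᴴ = c • H
      ext i j
      simp [conjTranspose_apply, hsym i j]
    have h2 : (Bᵀ * B).IsHermitian := by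
      have := Matrix.isHermitian_conjTranspose_mul_self B
      rwa [conjTranspose_eq_transpose_of_trivial] at this
    exact h1.sub h2
  · intro u
    rw [star_trivial]
    have hu : R⁻¹ *ᵥ (R *ᵥ u) = u := by
      rw [Matrix.mulVec_mulVec, Matrix.nonsing_inv_mul _ hdet, Matrix.one_mulVec]
    set w := R *ᵥ u with hw'
    have hH_eq : u ⬝ᵥ (H *ᵥ u) = w ⬝ᵥ w := by
      rw [← hRR, ← Matrix.mulVec_mulVec, Matrix.dotProduct_mulVec u,
        ← Matrix.mulVec_transpose, hRT]
    have hBu : B *ᵥ u = A *ᵥ w := by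
      rw [hA', hw', ← Matrix.mulVec_mulVec, hu]
    have hBB : u ⬝ᵥ ((Bᵀ * B) *ᵥ u) = (B *ᵥ u) ⬝ᵥ (B *ᵥ u) := by
      rw [← Matrix.mulVec_mulVec, Matrix.dotProduct_mulVec u, vecMul_transpose]
    have hexp : u ⬝ᵥ ((c • H - Bᵀ * B) *ᵥ u)
        = c * (u ⬝ᵥ (H *ᵥ u)) - u ⬝ᵥ ((Bᵀ * B) *ᵥ u) := by
      rw [Matrix.sub_mulVec, dotProduct_sub, smul_mulVec, dotProduct_smul,
        smul_eq_mul]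
    rw [hexp, hH_eq, hBB, hBu]
    have := claim3 w
    linarith

end BenziAux4

namespace BenziAux5

lemma scalar_quad {c a d e s t : ℝ} (hc : 0 ≤ c) (hd : 0 < d) (ha4 : 4*c*d ≤ a)
    (ha : 0 < a) (he0 : 0 ≤ e) (hec : e ≤ c*a)
    (hre : s*a - e = (s^2 - t^2)*d) (him : t*a = 2*s*t*d)
    (hne : ¬(s = 0 ∧ t = 0)) : t = 0 ∧ 0 < s := by
  have ht : t = 0 := by
    by_contra ht
    have ha2 : a = 2*s*d := by
      have h' : t * a = t * (2*s*d) := by linear_combination him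
      exact mul_left_cancel₀ ht h'
    have he : e = s^2*d + t^2*d := by linear_combination -hre + s*ha2
    have h2c : 2*c ≤ s := by nlinarith
    have htd : 0 < t^2*d := mul_pos (by positivity) hd
    nlinarith
  refine ⟨ht, ?_⟩
  rw [ht] at hre
  by_contra hs
  push_neg at hs
  have h1 : s*a = s^2*d + e := by linear_combination hre
  have h2 : s*a ≤ 0 := mul_nonpos_of_nonpos_of_nonneg hs ha.le
  have h3 : 0 ≤ s^2*d := by positivity
  have hs0 : s = 0 := by nlinarith
  exact hne ⟨hs0, ht⟩

end BenziAux5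

open BenziAux BenziAux2 BenziAux3 BenziAux4 BenziAux5

/-- **Benzi–Simoncini theorem (Theorem 6.5): a sufficient condition for positive
stability of the asymmetric saddle-point matrix.**
Let `H` be symmetric positive definite, `B` of full rank `m`, `S_H = B H⁻¹ Bᵀ`, and
suppose the smallest eigenvalue of `H` satisfies `λ_min ≥ 4 ‖S_H‖₂` (spectral norm,
realized as the operator norm of `S_H` acting on Euclidean space; the hypothesis is
stated for every eigenvalue of `H`, equivalently for the smallest one). Then every
eigenvalue over `ℂ` of `K_A = [[H, -Bᵀ],[B, 0]]` is real and strictly positive. -/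
theorem benzi_simoncini {n m : ℕ}
    (H : Matrix (Fin n) (Fin n) ℝ) (hH : H.PosDef)
    (B : Matrix (Fin m) (Fin n) ℝ) (hB : B.rank = m)
    (SH : Matrix (Fin m) (Fin m) ℝ) (hSH : SH = B * H⁻¹ * Bᵀ)
    (hmin : ∀ i : Fin n,
      4 * ‖Matrix.toEuclideanCLM (𝕜 := ℝ) SH‖ ≤ hH.1.eigenvalues i) :
    ∀ μ ∈ spectrum ℂ ((Matrix.fromBlocks H (-Bᵀ) B 0).map (Complex.ofReal ·)),
      μ.im = 0 ∧ 0 < μ.re := by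
  intro μ hμ
  have hc : (0:ℝ) ≤ ‖Matrix.toEuclideanCLM (𝕜 := ℝ) SH‖ := norm_nonneg _
  set c := ‖Matrix.toEuclideanCLM (𝕜 := ℝ) SH‖ with hc'
  set K : Matrix (Fin n ⊕ Fin m) (Fin n ⊕ Fin m) ℂ :=
    (Matrix.fromBlocks H (-Bᵀ) B 0).map (Complex.ofReal ·) with hK'
  -- obtain an eigenvector
  have hspec : spectrum ℂ (Matrix.toLinAlgEquiv' K) = spectrum ℂ K :=
    AlgEquiv.spectrum_eq _ _
  rw [← hspec] at hμ
  obtain ⟨v, hv⟩ :=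
    (Module.End.hasEigenvalue_iff_mem_spectrum.mpr hμ).exists_hasEigenvector
  have hvne : v ≠ 0 := hv.2
  have hKv : K *ᵥ v = μ • v := by
    have := hv.apply_eq_smul
    rwa [Matrix.toLinAlgEquiv'_apply] at this
  set x : Fin n → ℂ := fun i => v (Sum.inl i) with hx'
  set y : Fin m → ℂ := fun j => v (Sum.inr j) with hy'
  have hv_elim : v = Sum.elim x y := by
    funext s; cases s <;> rfl
  have hK : K = Matrix.fromBlocks (mc H) (-(mc Bᵀ)) (mc B) 0 := by
    rw [hK', Matrix.fromBlocks_map]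
    ext i j
    cases i <;> cases j <;> simp [mc, Matrix.fromBlocks]
  rw [hK, hv_elim, Matrix.fromBlocks_mulVec] at hKv
  have h1 : mc H *ᵥ x - mc Bᵀ *ᵥ y = μ • x := by
    funext i
    have h := congrFun hKv (Sum.inl i)
    simp only [Sum.elim_inl, Matrix.neg_mulVec, Pi.add_apply, Pi.neg_apply,
      Pi.smul_apply, smul_eq_mul, Sum.elim_comp_inl, Sum.elim_comp_inr] at h
    simpa [sub_eq_add_neg] using h
  have h2 : mc B *ᵥ x = μ • y := by
    funext j
    have h := congrFun hKv (Sum.inr j)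
    simp only [Sum.elim_inr, Matrix.zero_mulVec, add_zero, Pi.add_apply,
      Pi.smul_apply, smul_eq_mul, Sum.elim_comp_inl, Sum.elim_comp_inr] at h
    simpa using h
  have hpdH : (mc H).PosDef := mc_posDef hH
  have dotBt : ∀ z : Fin m → ℂ,
      star x ⬝ᵥ (mc Bᵀ *ᵥ z) = star (mc B *ᵥ x) ⬝ᵥ z := fun z => by
    rw [Matrix.dotProduct_mulVec, mc_transpose, vecMul_transpose, ← mc_star_mulVec]
  -- case μ = 0 : impossible
  rcases eq_or_ne μ 0 with hμ0 | hμ0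
  · exfalso
    rw [hμ0, zero_smul] at h1 h2
    have hax : star x ⬝ᵥ (mc H *ᵥ x) = 0 := by
      have h := congrArg (fun w => star x ⬝ᵥ w) h1
      simp only [dotProduct_sub, dotProduct_zero] at h
      rw [dotBt y, h2] at h
      simpa using h
    have hx0 : x = 0 := by
      by_contra hxne
      exact (hpdH.dotProduct_mulVec_pos hxne).ne' hax
    have hBty : mc Bᵀ *ᵥ y = 0 := by
      have h := h1
      rw [hx0, Matrix.mulVec_zero] at h
      simpa using h.symm
    have hyne : y ≠ 0 := by
      intro hy0
      apply hvne
      rw [hv_elim, hx0, hy0]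
      funext s; cases s <;> rfl
    have hpdBB : (mc (B * Bᵀ)).PosDef := mc_posDef (mul_transpose_posDef B hB)
    have hz : star y ⬝ᵥ (mc (B * Bᵀ) *ᵥ y) = 0 := by
      rw [mc_mul, ← Matrix.mulVec_mulVec, hBty, Matrix.mulVec_zero, dotProduct_zero]
    exact (hpdBB.dotProduct_mulVec_pos hyne).ne' hz
  -- case μ ≠ 0
  have hxne : x ≠ 0 := by
    intro hx0
    rw [hx0, Matrix.mulVec_zero] at h2
    have hy0 : y = 0 := by
      rcases smul_eq_zero.mp h2.symm with h | h
      · exact absurd h hμ0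
      · exact h
    apply hvne
    rw [hv_elim, hx0, hy0]
    funext s; cases s <;> rfl
  -- key identities
  have hI : star x ⬝ᵥ (mc H *ᵥ x) - (starRingEnd ℂ) μ * (star y ⬝ᵥ y)
      = μ * (star x ⬝ᵥ x) := by
    have h := congrArg (fun w => star x ⬝ᵥ w) h1
    simp only [dotProduct_sub, dotProduct_smul, smul_eq_mul] at h
    rw [dotBt y, h2, star_smul, smul_dotProduct] at h
    simp only [starRingEnd_apply, smul_eq_mul] at h ⊢
    exact h
  have hE : star x ⬝ᵥ (mc (Bᵀ * B) *ᵥ x)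
      = (starRingEnd ℂ) μ * (μ * (star y ⬝ᵥ y)) := by
    rw [mc_mul, ← Matrix.mulVec_mulVec, dotBt (mc B *ᵥ x), h2, star_smul,
      smul_dotProduct, dotProduct_smul]
    simp only [starRingEnd_apply, smul_eq_mul]
  have hQ : μ * (star x ⬝ᵥ (mc H *ᵥ x)) - star x ⬝ᵥ (mc (Bᵀ * B) *ᵥ x)
      = μ^2 * (star x ⬝ᵥ x) := by
    linear_combination μ * hI - hE
  -- positivity and reality facts
  have hapos : 0 < star x ⬝ᵥ (mc H *ᵥ x) := hpdH.dotProduct_mulVec_pos hxne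
  have ha_im : (star x ⬝ᵥ (mc H *ᵥ x)).im = 0 :=
    ((Complex.lt_def.mp hapos).2).symm
  have ha_re : 0 < (star x ⬝ᵥ (mc H *ᵥ x)).re := by
    have := (Complex.lt_def.mp hapos).1
    simpa using this
  have hd0 : 0 ≤ star x ⬝ᵥ x := dotProduct_star_self_nonneg x
  have hd_im : (star x ⬝ᵥ x).im = 0 := ((Complex.le_def.mp hd0).2).symm
  have hd_re : 0 < (star x ⬝ᵥ x).re := by
    have h0 := (Complex.le_def.mp hd0).1
    simp only [Complex.zero_re] at h0
    rcases h0.lt_or_eq with h | h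
    · exact h
    · exact absurd (dotProduct_star_self_eq_zero.mp
        (Complex.ext h.symm hd_im)) hxne
  have he0 : 0 ≤ star x ⬝ᵥ (mc (Bᵀ * B) *ᵥ x) := by
    have hpsd : (mc (Bᵀ * B)).PosSemidef := by
      have : (Bᵀ * B).PosSemidef := by
        have h := Matrix.posSemidef_conjTranspose_mul_self B
        rwa [conjTranspose_eq_transpose_of_trivial] at h
      exact mc_posSemidef this
    exact hpsd.dotProduct_mulVec_nonneg x
  have he_im : (star x ⬝ᵥ (mc (Bᵀ * B) *ᵥ x)).im = 0 :=
    ((Complex.le_def.mp he0).2).symm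
  have he_re : 0 ≤ (star x ⬝ᵥ (mc (Bᵀ * B) *ᵥ x)).re := by
    have := (Complex.le_def.mp he0).1
    simpa using this
  -- eigenvalue bound : a ≥ 4 c d
  have hshift : (H - (4*c) • (1 : Matrix (Fin n) (Fin n) ℝ)).PosSemidef :=
    shift_posSemidef hH.1 (4*c) (fun i => by
      have := hmin i
      linarith)
  have hq1 : 0 ≤ star x ⬝ᵥ (mc (H - (4*c) • 1) *ᵥ x) := (mc_posSemidef hshift).dotProduct_mulVec_nonneg x
  have hq1' : 0 ≤ (star x ⬝ᵥ (mc H *ᵥ x)).re - 4*c*(star x ⬝ᵥ x).re := by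
    have heq : star x ⬝ᵥ (mc (H - (4*c) • 1) *ᵥ x)
        = star x ⬝ᵥ (mc H *ᵥ x) - ((4*c : ℝ) : ℂ) * (star x ⬝ᵥ x) := by
      rw [mc_sub, mc_smul_one, Matrix.sub_mulVec, dotProduct_sub,
        smul_mulVec, Matrix.one_mulVec, dotProduct_smul, smul_eq_mul]
    rw [heq] at hq1
    have h := (Complex.le_def.mp hq1).1
    simp only [Complex.zero_re, Complex.sub_re, Complex.mul_re, Complex.ofReal_re,
      Complex.ofReal_im, hd_im] at h
    simpa using h
  -- the key PSD bound : e ≤ c a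
  have hq2 : 0 ≤ star x ⬝ᵥ (mc (c • H - Bᵀ * B) *ᵥ x) :=
    (mc_posSemidef (key_psd H hH B SH hSH)).dotProduct_mulVec_nonneg x
  have hq2' : (star x ⬝ᵥ (mc (Bᵀ * B) *ᵥ x)).re
      ≤ c * (star x ⬝ᵥ (mc H *ᵥ x)).re := by
    have heq : star x ⬝ᵥ (mc (c • H - Bᵀ * B) *ᵥ x)
        = (c : ℂ) * (star x ⬝ᵥ (mc H *ᵥ x)) - star x ⬝ᵥ (mc (Bᵀ * B) *ᵥ x) := by
      rw [mc_sub, mc_smul, Matrix.sub_mulVec, dotProduct_sub,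
        smul_mulVec, dotProduct_smul, smul_eq_mul]
    rw [heq] at hq2
    have h := (Complex.le_def.mp hq2).1
    simp only [Complex.zero_re, Complex.sub_re, Complex.mul_re, Complex.ofReal_re,
      Complex.ofReal_im, ha_im] at h
    simpa using h
  -- extract real and imaginary parts of the quadratic equation
  have hQre := congrArg Complex.re hQ
  have hQim := congrArg Complex.im hQ
  rw [pow_two] at hQre hQim
  simp only [Complex.sub_re, Complex.sub_im, Complex.mul_re, Complex.mul_im,
    ha_im, hd_im, he_im] at hQre hQim
  have hne : ¬(μ.re = 0 ∧ μ.im = 0) := by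
    intro ⟨h1', h2'⟩
    exact hμ0 (Complex.ext h1' h2')
  have := scalar_quad (c := c) (a := (star x ⬝ᵥ (mc H *ᵥ x)).re)
      (d := (star x ⬝ᵥ x).re) (e := (star x ⬝ᵥ (mc (Bᵀ * B) *ᵥ x)).re)
      (s := μ.re) (t := μ.im) hc hd_re (by linarith) ha_re he_re hq2'
      (by linear_combination hQre)
      (by linear_combination hQim) hne
  exact ⟨this.1, this.2⟩
end

section
/- Let H be an n×n real symmetric positive definite matrix, let w ∈ ℝⁿ have all components nonzero, let ζ ∈ ℝⁿ be the componentwise sign vector ζᵢ = −sign(wᵢ), and let Δ > 0. Then the unique minimizer of the linear function u ↦ ⟨ζ, −H u⟩ over the ellipsoid {u ∈ ℝⁿ : ⟨u, H u⟩ ≤ Δ} is u* = √(Δ / ⟨ζ, H ζ⟩) · ζ; that is, u* is a strictly positive scalar multiple of the vector whose i-th component is −sign(wᵢ). Consequently the resulting update q₁ ← q₁ + h·u*, h > 0, is the sign gradient descent iteration q₁ ← q₁ − α·sign(∇g₀(q₁)) with α = h·√(Δ/⟨ζ,Hζ⟩) > 0, when w = ∇g₀(q₁). -/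
open Matrix

/-- **Sign gradient descent as an inverse-optimal algorithm (Section 7.2).**
Let `H` be symmetric positive definite (the Hessian metricizing the control set),
`w` a vector with all components nonzero (the gradient `∇g₀(q₁)`), and
`ζ = -sign(w)` the negative componentwise sign vector. Then the unique minimizer of
`u ↦ ⟨ζ, -H u⟩` over the ellipsoid `{u : ⟨u, H u⟩ ≤ Δ}`, `Δ > 0`, is
`u* = √(Δ / ⟨ζ, H ζ⟩) • ζ`, a strictly positive multiple of `-sign(w)`; consequently,
the update `q₁ ← q₁ + h u*` with `h > 0` is the sign gradient descent iteration
`q₁ ← q₁ - α • sign(w)` with `α = h √(Δ / ⟨ζ, H ζ⟩) > 0`. -/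
theorem sign_gradient_descent_inverse_optimal {n : ℕ} (hn : 0 < n)
    (H : Matrix (Fin n) (Fin n) ℝ) (hH : H.PosDef)
    (w : Fin n → ℝ) (hw : ∀ i, w i ≠ 0)
    (ζ : Fin n → ℝ) (hζ : ∀ i, ζ i = -Real.sign (w i))
    (Δ : ℝ) (hΔ : 0 < Δ)
    (σ : ℝ) (hσ : σ = Real.sqrt (Δ / (ζ ⬝ᵥ (H *ᵥ ζ))))
    (ustar : Fin n → ℝ) (hustar : ustar = σ • ζ) :
    0 < σ ∧
    ustar ⬝ᵥ (H *ᵥ ustar) ≤ Δ ∧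
    (∀ u : Fin n → ℝ, u ⬝ᵥ (H *ᵥ u) ≤ Δ →
      ζ ⬝ᵥ (-(H *ᵥ ustar)) ≤ ζ ⬝ᵥ (-(H *ᵥ u))) ∧
    (∀ u : Fin n → ℝ, u ⬝ᵥ (H *ᵥ u) ≤ Δ →
      ζ ⬝ᵥ (-(H *ᵥ u)) = ζ ⬝ᵥ (-(H *ᵥ ustar)) → u = ustar) ∧
    (∀ h : ℝ, 0 < h → ∀ q₁ : Fin n → ℝ,
      q₁ + h • ustar = q₁ - (h * σ) • (fun i => Real.sign (w i)) ∧ 0 < h * σ) := by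
  have hζ0 : ζ ≠ 0 := by
    intro h
    have h0 := congrFun h ⟨0, hn⟩
    rw [hζ] at h0
    simp at h0
    exact hw _ h0
  set c := ζ ⬝ᵥ (H *ᵥ ζ) with hc_def
  have hc : 0 < c := by
    have := hH.dotProduct_mulVec_pos hζ0
    simpa using this
  have hσpos : 0 < σ := by
    rw [hσ]; exact Real.sqrt_pos.mpr (div_pos hΔ hc)
  have hσsq : σ ^ 2 * c = Δ := by
    rw [hσ, Real.sq_sqrt (le_of_lt (div_pos hΔ hc))]
    field_simp
  -- symmetry
  have hsymm : ∀ x y : Fin n → ℝ, x ⬝ᵥ (H *ᵥ y) = y ⬝ᵥ (H *ᵥ x) := by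
    intro x y
    rw [dotProduct_mulVec, show (x ᵥ* H) = Hᵀ *ᵥ x from (mulVec_transpose H x).symm,
      show Hᵀ = H from hH.1, dotProduct_comm]
  have hpsd : ∀ x : Fin n → ℝ, 0 ≤ x ⬝ᵥ (H *ᵥ x) := by
    intro x
    rcases eq_or_ne x 0 with h | h
    · simp [h]
    · exact le_of_lt (by simpa using hH.dotProduct_mulVec_pos h)
  -- Cauchy-Schwarz
  have hCS : ∀ u : Fin n → ℝ, (ζ ⬝ᵥ (H *ᵥ u)) ^ 2 ≤ c * (u ⬝ᵥ (H *ᵥ u)) := by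
    intro u
    set s := (ζ ⬝ᵥ (H *ᵥ u)) / c with hs
    have h0 := hpsd (u - s • ζ)
    have hexp : (u - s • ζ) ⬝ᵥ (H *ᵥ (u - s • ζ)) =
        u ⬝ᵥ (H *ᵥ u) - 2 * s * (ζ ⬝ᵥ (H *ᵥ u)) + s ^ 2 * c := by
      rw [mulVec_sub, mulVec_smul, sub_dotProduct, smul_dotProduct,
        dotProduct_sub, dotProduct_sub, dotProduct_smul, dotProduct_smul,
        hsymm u ζ, ← hc_def]
      simp only [smul_eq_mul]
      ring
    rw [hexp] at h0
    have hsc : s * c = ζ ⬝ᵥ (H *ᵥ u) := by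
      rw [hs]; field_simp
    nlinarith [mul_nonneg hc.le h0, hsc]
  have hustarval : ζ ⬝ᵥ (H *ᵥ ustar) = σ * c := by
    rw [hustar, mulVec_smul, dotProduct_smul]
    simp [smul_eq_mul, ← hc_def]
  have hbound : ∀ u : Fin n → ℝ, u ⬝ᵥ (H *ᵥ u) ≤ Δ → ζ ⬝ᵥ (H *ᵥ u) ≤ σ * c := by
    intro u hu
    have h1 := hCS u
    nlinarith [hσpos, hc, mul_pos hσpos hc]
  refine ⟨hσpos, ?_, ?_, ?_, ?_⟩
  · rw [hustar, mulVec_smul, smul_dotProduct, dotProduct_smul]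
    simp only [smul_eq_mul, ← hc_def]
    nlinarith
  · intro u hu
    have := hbound u hu
    simp only [dotProduct_neg, hustarval]
    linarith
  · intro u hu heq
    simp only [dotProduct_neg, hustarval] at heq
    have heq' : ζ ⬝ᵥ (H *ᵥ u) = σ * c := by linarith
    have hv := hpsd (u - ustar)
    have hexp : (u - ustar) ⬝ᵥ (H *ᵥ (u - ustar)) =
        u ⬝ᵥ (H *ᵥ u) - 2 * σ * (ζ ⬝ᵥ (H *ᵥ u)) + σ ^ 2 * c := by
      rw [hustar, mulVec_sub, mulVec_smul, sub_dotProduct, smul_dotProduct,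
        dotProduct_sub, dotProduct_sub, dotProduct_smul, dotProduct_smul,
        hsymm u ζ, ← hc_def]
      simp only [smul_eq_mul]
      ring
    have hv0 : (u - ustar) ⬝ᵥ (H *ᵥ (u - ustar)) ≤ 0 := by
      rw [hexp, heq']
      nlinarith
    have : u - ustar = 0 := by
      by_contra h
      have := hH.dotProduct_mulVec_pos h
      simp only [star_trivial] at this
      linarith
    exact sub_eq_zero.mp this
  · intro h hh q₁
    constructor
    · rw [hustar]
      funext i
      simp [hζ i, smul_eq_mul]
      ring
    · exact mul_pos hh hσpos
end
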